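/- Let T and U be Silver trees and let f : 2^ω × ω^ω → 2^ω be continuous on [T] × ω^ω. Let σ ∈ 2^{<ω}, v ∈ ω^{<ω}, and k < ω. Then there exist a tuple w ∈ ω^{<ω} with v ⊆ w and Silver trees S ⊑_{k+1} T and V ⊑_{k+1} U such that f(a,x) ∉ σ⊕[V] for all a ∈ [S] and x ∈ B_w. -/

import Mathlib

open Set

/-- The word `u₀⌢i₀⌢u₁⌢i₁⌢…⌢u_n⌢i_n` built from the defining tuples `u`
and the choice of bits `i`. -/
def silverWord (u : ℕ → List Bool) (i : ℕ → Bool) : ℕ → List Bool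
  | 0 => u 0 ++ [i 0]
  | n + 1 => silverWord u i n ++ (u (n + 1) ++ [i (n + 1)])

/-- `T ⊆ 2^{<ω}` is the Silver tree with defining tuples `u`: it consists of all
tuples `u₀⌢i₀⌢…⌢u_n⌢i_n` together with all their initial segments. -/
def IsSilver (T : Set (List Bool)) (u : ℕ → List Bool) : Prop :=
  T = { s | ∃ (n : ℕ) (i : ℕ → Bool), s <+: silverWord u i n }

/-- `T` is a Silver tree. -/
def SilverTree (T : Set (List Bool)) : Prop :=
  ∃ u, IsSilver T u

/-- The portion `T↾u = {s ∈ T : u ⊆ s or s ⊆ u}`. -/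
def portion (T : Set (List Bool)) (u : List Bool) : Set (List Bool) :=
  { s ∈ T | u <+: s ∨ s <+: u }

/-- The shift `σ⊕v` of a tuple `v` by a tuple `σ` (coordinatewise mod-2 sum,
with `σ` padded by `0` or truncated to the length of `v`). -/
def shiftT (σ v : List Bool) : List Bool :=
  List.ofFn fun i : Fin v.length => xor (v.get i) (σ.getD i.1 false)

/-- The shift `σ⊕T` of a set of tuples. -/
def shiftTree (σ : List Bool) (T : Set (List Bool)) : Set (List Bool) :=
  shiftT σ '' T

/-- The shift `σ⊕a` of a point of Cantor space. -/
def shiftR (σ : List Bool) (a : ℕ → Bool) : ℕ → Bool :=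
  fun i => xor (a i) (σ.getD i false)

/-- The restriction `a↾n ∈ 2^{<ω}` of `a ∈ 2^ω`. -/
def restrictReal (a : ℕ → Bool) (n : ℕ) : List Bool :=
  List.ofFn fun i : Fin n => a i.1

/-- `[T]`, the set of branches of `T`. -/
def branches (T : Set (List Bool)) : Set (ℕ → Bool) :=
  { a | ∀ n, restrictReal a n ∈ T }

/-- The splitting levels `oi_T(n) = |u₀|+1+…+|u_{n-1}|+1+|u_n|` computed
from the defining tuples `u`. -/
def oi (u : ℕ → List Bool) (n : ℕ) : ℕ :=
  (∑ k ∈ Finset.range (n + 1), (u k).length) + n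

/-- `S ⊑ₙ T` : `S ⊆ T` and the first `n` splitting levels agree. -/
def RefinesN (S T : Set (List Bool)) (n : ℕ) : Prop :=
  S ⊆ T ∧ ∀ uS uT : ℕ → List Bool, IsSilver S uS → IsSilver T uT →
    ∀ k < n, oi uS k = oi uT k

/-- `S` is clopen in `T` : `S` is a finite union of portions of `T`. -/
def ClopenIn (S T : Set (List Bool)) : Prop :=
  ∃ F : Finset (List Bool), ↑F ⊆ T ∧ S = ⋃ u ∈ F, portion T u

/-- The Baire interval `B_v = {x ∈ ω^ω : v ⊂ x}`. -/
def baire (v : List ℕ) : Set (ℕ → ℕ) :=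
  { x | ∀ i : Fin v.length, x i.1 = v.get i }

/-- `s ∈ 2^{<ω}` is an initial segment of `a ∈ 2^ω`. -/
def prefixOfReal (s : List Bool) (a : ℕ → Bool) : Prop :=
  ∀ i : Fin s.length, a i.1 = s.get i

namespace Aux11

def stree (u : ℕ → List Bool) : Set (List Bool) :=
  { s | ∃ (n : ℕ) (i : ℕ → Bool), s <+: silverWord u i n }



lemma oi_succ (u : ℕ → List Bool) (n : ℕ) :
    oi u (n + 1) = oi u n + (u (n + 1)).length + 1 := by
  simp [oi, Finset.sum_range_succ]; ring

lemma oi_strictMono (u : ℕ → List Bool) : StrictMono (oi u) := by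
  apply strictMono_nat_of_lt_succ
  intro n; rw [oi_succ]; omega

lemma self_le_oi (u : ℕ → List Bool) (n : ℕ) : n ≤ oi u n := by
  simp [oi]

lemma word_length (u : ℕ → List Bool) (i : ℕ → Bool) (n : ℕ) :
    (silverWord u i n).length = oi u n + 1 := by
  induction n with
  | zero => simp [silverWord, oi]
  | succ n ih => simp [silverWord, ih, oi_succ]; ring

lemma word_mono (u : ℕ → List Bool) (i : ℕ → Bool) {m n : ℕ} (h : m ≤ n) :
    silverWord u i m <+: silverWord u i n := by
  induction n with
  | zero => simp_all
  | succ n ih =>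
    rcases Nat.eq_or_lt_of_le h with rfl | h'
    · exact List.prefix_rfl
    · exact (ih (Nat.lt_succ_iff.mp h')).trans ⟨_, rfl⟩

lemma word_congr {u u' : ℕ → List Bool} {i i' : ℕ → Bool} {n : ℕ}
    (h : ∀ j ≤ n, u j = u' j ∧ i j = i' j) :
    silverWord u i n = silverWord u' i' n := by
  induction n with
  | zero => simp [silverWord, (h 0 le_rfl).1, (h 0 le_rfl).2]
  | succ n ih =>
    have h1 := h (n+1) le_rfl
    simp [silverWord, ih (fun j hj => h j (hj.trans (Nat.le_succ n))), h1.1, h1.2]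


lemma oi_zero (u : ℕ → List Bool) : oi u 0 = (u 0).length := by simp [oi]

/-- letter at split position -/
lemma word_get_split (u : ℕ → List Bool) (i : ℕ → Bool) {n j : ℕ} (hj : j ≤ n) :
    (silverWord u i n).getD (oi u j) false = i j := by
  induction n with
  | zero =>
    interval_cases j
    show (u 0 ++ [i 0]).getD (oi u 0) false = i 0
    rw [List.getD_append_right _ _ _ _ (by simp [oi_zero])]
    simp [oi_zero]
  | succ n ih =>
    rcases Nat.le_succ_iff.mp hj with h | rfl
    · have hlt : oi u j < (silverWord u i n).length := by
        rw [word_length]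
        exact Nat.lt_succ_of_le ((oi_strictMono u).monotone h)
      show ((silverWord u i n) ++ _).getD (oi u j) false = i j
      rw [List.getD_append _ _ _ _ hlt]
      exact ih h
    · show ((silverWord u i n) ++ (u (n+1) ++ [i (n+1)])).getD (oi u (n+1)) false = i (n+1)
      rw [List.getD_append_right _ _ _ _ (by rw [word_length, oi_succ]; omega),
          word_length, oi_succ,
          List.getD_append_right _ _ _ _ (by omega)]
      simp

/-- letter inside block `u 0` -/
lemma word_get_u0 (u : ℕ → List Bool) (i : ℕ → Bool) {n l : ℕ} (hl : l < (u 0).length) :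
    (silverWord u i n).getD l false = (u 0).getD l false := by
  induction n with
  | zero =>
    show (u 0 ++ [i 0]).getD l false = _
    rw [List.getD_append _ _ _ _ hl]
  | succ n ih =>
    show ((silverWord u i n) ++ _).getD l false = _
    have h2 : l < (silverWord u i n).length := by
      rw [word_length]
      have := oi_zero u ▸ (oi_strictMono u).monotone (Nat.zero_le n)
      omega
    rw [List.getD_append _ _ _ _ h2, ih]

/-- letter inside block `u (j+1)` -/
lemma word_get_mid (u : ℕ → List Bool) (i : ℕ → Bool) {n j q : ℕ} (hj : j < n)
    (hq : q < (u (j+1)).length) :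
    (silverWord u i n).getD (oi u j + 1 + q) false = (u (j+1)).getD q false := by
  induction n with
  | zero => omega
  | succ n ih =>
    rcases Nat.lt_succ_iff_lt_or_eq.mp hj with h | rfl
    · show ((silverWord u i n) ++ _).getD (oi u j + 1 + q) false = _
      rw [List.getD_append _ _ _ _ (by
        rw [word_length]
        have h1 : oi u j + 1 + q < oi u (j+1) + 1 := by rw [oi_succ]; omega
        have h2 : oi u (j+1) ≤ oi u n := (oi_strictMono u).monotone h
        omega), ih h]
    · show ((silverWord u i j) ++ (u (j+1) ++ [i (j+1)])).getD (oi u j + 1 + q) false = _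
      rw [List.getD_append_right _ _ _ _ (by rw [word_length]; omega), word_length,
          List.getD_append _ _ _ _ (by omega)]
      congr 1; omega

/-- every position `l ≤ oi u n` is a split `oi u j` (`j ≤ n`), lies in `u 0`,
or lies in some block `u (j+1)` with `j < n`. -/
lemma position_trichotomy (u : ℕ → List Bool) {n l : ℕ} (hl : l ≤ oi u n) :
    l < (u 0).length ∨ (∃ j, j < n ∧ ∃ q, q < (u (j+1)).length ∧ l = oi u j + 1 + q)
      ∨ (∃ j, j ≤ n ∧ l = oi u j) := by
  induction n with
  | zero =>
    rw [oi_zero] at hl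
    rcases Nat.lt_or_ge l (u 0).length with h | h
    · exact Or.inl h
    · exact Or.inr (Or.inr ⟨0, le_rfl, by rw [oi_zero]; omega⟩)
  | succ n ih =>
    rcases le_or_gt l (oi u n) with h | h
    · rcases ih h with h1 | ⟨j, hj, hq⟩ | ⟨j, hj, hq⟩
      · exact Or.inl h1
      · exact Or.inr (Or.inl ⟨j, hj.trans (Nat.lt_succ_self n), hq⟩)
      · exact Or.inr (Or.inr ⟨j, hj.trans (Nat.le_succ n), hq⟩)
    · rw [oi_succ] at hl
      rcases Nat.lt_or_ge l (oi u (n+1)) with h2 | h2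
      · refine Or.inr (Or.inl ⟨n, Nat.lt_succ_self n, l - oi u n - 1, ?_, by omega⟩)
        rw [oi_succ] at h2; omega
      · exact Or.inr (Or.inr ⟨n+1, le_rfl, by rw [oi_succ] at h2 ⊢; omega⟩)

lemma isSilver_stree (u : ℕ → List Bool) : IsSilver (stree u) u := rfl

lemma word_mem_stree (u : ℕ → List Bool) (i : ℕ → Bool) (n : ℕ) :
    silverWord u i n ∈ stree u := ⟨n, i, List.prefix_rfl⟩

lemma prefix_mem_stree {u : ℕ → List Bool} {s t : List Bool} (h : s <+: t)
    (ht : t ∈ stree u) : s ∈ stree u := by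
  obtain ⟨n, i, h2⟩ := ht; exact ⟨n, i, h.trans h2⟩

lemma prefix_getD {α : Type*} {l₁ l₂ : List α} (h : l₁ <+: l₂) {n : ℕ}
    (hn : n < l₁.length) (d : α) : l₁.getD n d = l₂.getD n d := by
  rw [List.getD_eq_getElem _ _ hn, List.getD_eq_getElem _ _ (hn.trans_le h.length_le)]
  exact h.getElem hn

lemma restrictReal_length (a : ℕ → Bool) (n : ℕ) : (restrictReal a n).length = n := by
  simp [restrictReal]

lemma restrictReal_getD (a : ℕ → Bool) {n l : ℕ} (h : l < n) :
    (restrictReal a n).getD l false = a l := by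
  rw [List.getD_eq_getElem _ _ (by simp [restrictReal_length, h])]
  simp [restrictReal]

/-- a member of the tree of exact length `oi u n + 1` is a word -/
lemma eq_word_of_mem_of_length {u : ℕ → List Bool} {s : List Bool} (hs : s ∈ stree u)
    {n : ℕ} (hl : s.length = oi u n + 1) : ∃ i, s = silverWord u i n := by
  obtain ⟨n', i, hpre⟩ := hs
  have hlen : s.length ≤ oi u n' + 1 := by rw [← word_length u i n']; exact hpre.length_le
  have hnn : n ≤ n' := by
    have := (oi_strictMono u).le_iff_le.mp (by omega : oi u n ≤ oi u n'); exact this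
  refine ⟨i, ?_⟩
  have h2 : silverWord u i n <+: silverWord u i n' := word_mono u i hnn
  have := List.prefix_of_prefix_length_le hpre h2 (by rw [hl, word_length])
  exact this.eq_of_length (by rw [hl, word_length])

/-- restriction of a branch to a splitting level is a word -/
lemma branch_restrict {u : ℕ → List Bool} {a : ℕ → Bool} (ha : a ∈ branches (stree u))
    (n : ℕ) : ∃ i, restrictReal a (oi u n + 1) = silverWord u i n :=
  eq_word_of_mem_of_length (ha _) (restrictReal_length _ _)

/-- value of a branch at a splitting position -/
lemma branch_get_split {u : ℕ → List Bool} {a : ℕ → Bool} (ha : a ∈ branches (stree u))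
    {n j : ℕ} (hj : j ≤ n) (i : ℕ → Bool)
    (hi : restrictReal a (oi u n + 1) = silverWord u i n) : a (oi u j) = i j := by
  have h1 : a (oi u j) = (restrictReal a (oi u n + 1)).getD (oi u j) false := by
    rw [restrictReal_getD]
    exact Nat.lt_succ_of_le ((oi_strictMono u).monotone hj)
  rw [h1, hi, word_get_split u i hj]

/-- two branches agreeing on the first `n+1` splits agree below `oi u n + 1` -/
lemma branch_agree {u : ℕ → List Bool} {a a' : ℕ → Bool}
    (ha : a ∈ branches (stree u)) (ha' : a' ∈ branches (stree u)) {n : ℕ}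
    (h : ∀ j ≤ n, a (oi u j) = a' (oi u j)) {l : ℕ} (hl : l ≤ oi u n) : a l = a' l := by
  obtain ⟨i, hi⟩ := branch_restrict ha n
  obtain ⟨i', hi'⟩ := branch_restrict ha' n
  have hii : ∀ j ≤ n, i j = i' j := fun j hj => by
    rw [← branch_get_split ha hj i hi, ← branch_get_split ha' hj i' hi', h j hj]
  have hww : silverWord u i n = silverWord u i' n :=
    word_congr (fun j hj => ⟨rfl, hii j hj⟩)
  have h1 : a l = (restrictReal a (oi u n + 1)).getD l false :=
    (restrictReal_getD a (Nat.lt_succ_of_le hl)).symm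
  have h2 : a' l = (restrictReal a' (oi u n + 1)).getD l false :=
    (restrictReal_getD a' (Nat.lt_succ_of_le hl)).symm
  rw [h1, h2, hi, hi', hww]

/-- the set of lengths of splitting nodes -/
def splits (T : Set (List Bool)) : Set ℕ :=
  { l | ∃ s : List Bool, s.length = l ∧ s ++ [true] ∈ T ∧ s ++ [false] ∈ T }

lemma word_eq_concat (u : ℕ → List Bool) (i : ℕ → Bool) (n : ℕ) :
    ∃ B : List Bool, B.length = oi u n ∧
      ∀ b : Bool, silverWord u (fun j => if j = n then b else i j) n = B ++ [b] := by
  induction n with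
  | zero => exact ⟨u 0, oi_zero u ▸ rfl, fun b => by simp [silverWord]⟩
  | succ n ih =>
    refine ⟨silverWord u i n ++ u (n+1), by rw [List.length_append, word_length, oi_succ]; ring, fun b => ?_⟩
    have hstep : silverWord u (fun j => if j = n + 1 then b else i j) (n+1)
        = silverWord u (fun j => if j = n + 1 then b else i j) n ++ (u (n+1) ++ [b]) := by
      simp [silverWord]
    have h2 : silverWord u (fun j => if j = n + 1 then b else i j) n = silverWord u i n :=
      word_congr (fun j hj => ⟨rfl, by simp [Nat.ne_of_lt (Nat.lt_succ_of_le hj)]⟩)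
    rw [hstep, h2, List.append_assoc]

lemma splits_stree (u : ℕ → List Bool) : splits (stree u) = Set.range (oi u) := by
  ext l
  constructor
  · rintro ⟨s, rfl, ⟨n₁, i₁, h₁⟩, ⟨n₂, i₂, h₂⟩⟩
    by_contra hcon
    have hran : ∀ j, s.length ≠ oi u j := fun j hj => hcon ⟨j, hj.symm⟩
    have hl1 : s.length < (silverWord u i₁ n₁).length := by
      calc s.length < (s ++ [true]).length := by simp
        _ ≤ _ := h₁.length_le
    have hl2 : s.length < (silverWord u i₂ n₂).length := by
      calc s.length < (s ++ [false]).length := by simp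
        _ ≤ _ := h₂.length_le
    have hv1 : (silverWord u i₁ n₁).getD s.length false = true := by
      rw [← prefix_getD h₁ (by simp) false, List.getD_append_right _ _ _ _ le_rfl]
      simp
    have hv2 : (silverWord u i₂ n₂).getD s.length false = false := by
      rw [← prefix_getD h₂ (by simp) false, List.getD_append_right _ _ _ _ le_rfl]
      simp
    rw [word_length] at hl1 hl2
    rcases position_trichotomy u (by omega : s.length ≤ oi u n₁) with h | ⟨j, hj, q, hq, heq⟩ | ⟨j, _, heq⟩
    · rw [word_get_u0 u i₁ h] at hv1
      rw [word_get_u0 u i₂ h] at hv2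
      rw [hv1] at hv2; exact Bool.noConfusion hv2
    · have hj2 : j < n₂ := by
        have : oi u j < s.length := by omega
        have h3 : oi u j < oi u n₂ := by omega
        exact (oi_strictMono u).lt_iff_lt.mp h3
      rw [heq, word_get_mid u i₁ hj hq] at hv1
      rw [heq, word_get_mid u i₂ hj2 hq] at hv2
      rw [hv1] at hv2; exact Bool.noConfusion hv2
    · exact hran j heq
  · rintro ⟨n, rfl⟩
    obtain ⟨B, hB, hBw⟩ := word_eq_concat u (fun _ => false) n
    refine ⟨B, hB, ⟨n, fun j => if j = n then true else false, ?_⟩,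
      ⟨n, fun j => if j = n then false else false, ?_⟩⟩
    · rw [← hBw true]
    · rw [← hBw false]


/-- the canonical branch with bit choices `i` -/
def sBranch (u : ℕ → List Bool) (i : ℕ → Bool) : ℕ → Bool :=
  fun l => (silverWord u i l).getD l false

lemma sBranch_getD (u : ℕ → List Bool) (i : ℕ → Bool) {n l : ℕ} (hl : l < oi u n + 1) :
    sBranch u i l = (silverWord u i n).getD l false := by
  unfold sBranch
  rcases le_total l n with h | h
  · exact prefix_getD (word_mono u i h) (by rw [word_length]; have := self_le_oi u l; omega) false
  · exact (prefix_getD (word_mono u i h) (by rw [word_length]; omega) false).symm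

lemma sBranch_mem_branches (u : ℕ → List Bool) (i : ℕ → Bool) :
    sBranch u i ∈ branches (stree u) := by
  intro m
  have hml : m ≤ oi u m + 1 := by have := self_le_oi u m; omega
  have : restrictReal (sBranch u i) m <+: silverWord u i m := by
    refine List.prefix_iff_eq_take.mpr (List.ext_getElem ?_ ?_)
    · rw [restrictReal_length, List.length_take, word_length]; omega
    · intro l h1 h2
      rw [List.getElem_take]
      rw [← List.getD_eq_getElem _ false, ← List.getD_eq_getElem _ false
        (by rw [word_length] at *; rw [List.length_take, word_length] at h2; omega)]
      rw [restrictReal_length] at h1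
      rw [restrictReal_getD _ h1]
      exact sBranch_getD u i (by have := self_le_oi u m; omega)
  exact prefix_mem_stree this (word_mem_stree u i m)

lemma sBranch_split (u : ℕ → List Bool) (i : ℕ → Bool) (j : ℕ) :
    sBranch u i (oi u j) = i j := by
  rw [sBranch_getD u i (Nat.lt_succ_self _), word_get_split u i le_rfl]

/-- fixing the `r`-th splitting bit to `c` -/
def fixT (u : ℕ → List Bool) (r : ℕ) (c : Bool) : ℕ → List Bool :=
  fun j => if j < r then u j else if j = r then u r ++ c :: u (r+1) else u (j+1)

def splice (r : ℕ) (c : Bool) (i : ℕ → Bool) : ℕ → Bool :=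
  fun j => if j < r then i j else if j = r then c else i (j-1)

lemma word_fix_lt (u : ℕ → List Bool) (r : ℕ) (c : Bool) (i : ℕ → Bool) {n : ℕ}
    (hn : n < r) : silverWord (fixT u r c) i n = silverWord u i n :=
  word_congr (fun j hj => ⟨by simp [fixT, lt_of_le_of_lt hj hn], rfl⟩)

lemma word_fix_ge (u : ℕ → List Bool) (r : ℕ) (c : Bool) (i : ℕ → Bool) {n : ℕ}
    (hn : r ≤ n) : silverWord (fixT u r c) i n = silverWord u (splice r c i) (n+1) := by
  induction n with
  | zero =>
    have : r = 0 := Nat.le_zero.mp hn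
    subst this
    show fixT u 0 c 0 ++ [i 0] = (u 0 ++ [splice 0 c i 0]) ++ (u 1 ++ [splice 0 c i 1])
    simp [fixT, splice, List.append_assoc]
  | succ n ih =>
    rcases Nat.lt_or_ge n r with h | h
    · -- n + 1 = r
      have hr : r = n + 1 := by omega
      subst hr
      show silverWord (fixT u (n+1) c) i n ++ (fixT u (n+1) c (n+1) ++ [i (n+1)]) = _
      rw [word_fix_lt u (n+1) c i (Nat.lt_succ_self n)]
      show _ = silverWord u (splice (n+1) c i) (n+1) ++ (u (n+2) ++ [splice (n+1) c i (n+2)])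
      have h1 : silverWord u (splice (n+1) c i) (n+1)
          = silverWord u i n ++ (u (n+1) ++ [c]) := by
        show silverWord u (splice (n+1) c i) n ++ (u (n+1) ++ [splice (n+1) c i (n+1)]) = _
        have : silverWord u (splice (n+1) c i) n = silverWord u i n :=
          word_congr (fun j hj => ⟨rfl, by simp [splice, Nat.lt_succ_of_le hj]⟩)
        rw [this]
        congr 2
        simp [splice]
      rw [h1]
      have h2 : splice (n+1) c i (n+2) = i (n+1) := by simp [splice]
      rw [h2]
      have h3 : fixT u (n+1) c (n+1) = u (n+1) ++ c :: u (n+2) := by simp [fixT]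
      rw [h3]
      simp [List.append_assoc]
    · show silverWord (fixT u r c) i n ++ (fixT u r c (n+1) ++ [i (n+1)]) = _
      rw [ih h]
      show _ = silverWord u (splice r c i) (n+1) ++ (u (n+2) ++ [splice r c i (n+2)])
      have h3 : fixT u r c (n+1) = u (n+2) := by
        have : ¬ (n+1 < r) := by omega
        have h4 : n+1 ≠ r := by omega
        simp [fixT, this, h4]
      have h5 : splice r c i (n+2) = i (n+1) := by
        have : ¬ (n+2 < r) := by omega
        have h6 : n+2 ≠ r := by omega
        simp [splice, this, h6]
      rw [h3, h5]

lemma stree_fix_subset (u : ℕ → List Bool) (r : ℕ) (c : Bool) :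
    stree (fixT u r c) ⊆ stree u := by
  rintro s ⟨n, i, hs⟩
  rcases Nat.lt_or_ge n r with h | h
  · rw [word_fix_lt u r c i h] at hs
    exact prefix_mem_stree hs (word_mem_stree u i n)
  · rw [word_fix_ge u r c i h] at hs
    exact prefix_mem_stree hs (word_mem_stree u _ (n+1))

lemma oi_fix_lt (u : ℕ → List Bool) (r : ℕ) (c : Bool) {j : ℕ} (hj : j < r) :
    oi (fixT u r c) j = oi u j := by
  unfold oi
  congr 1
  refine Finset.sum_congr rfl (fun x hx => ?_)
  rw [Finset.mem_range] at hx
  have : x < r := by omega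
  simp [fixT, this]

lemma oi_fix_ge (u : ℕ → List Bool) (r : ℕ) (c : Bool) (j : ℕ) :
    oi (fixT u r c) (r + j) = oi u (r + 1 + j) := by
  induction j with
  | zero =>
    rcases Nat.eq_zero_or_pos r with rfl | hr
    · show oi (fixT u 0 c) 0 = oi u 1
      rw [oi_zero, oi_succ, oi_zero]
      simp [fixT]
      ring
    · obtain ⟨r', rfl⟩ : ∃ r', r = r' + 1 := ⟨r - 1, by omega⟩
      show oi (fixT u (r'+1) c) (r'+1) = oi u (r'+2)
      rw [oi_succ, oi_succ, oi_succ, oi_fix_lt u (r'+1) c (Nat.lt_succ_self r')]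
      have : fixT u (r'+1) c (r'+1) = u (r'+1) ++ c :: u (r'+2) := by simp [fixT]
      rw [this]
      simp; ring
  | succ j ih =>
    have e1 : r + (j + 1) = (r + j) + 1 := by ring
    have e2 : r + 1 + (j + 1) = (r + 1 + j) + 1 := by ring
    rw [e1, e2, oi_succ, oi_succ, ih]
    have : fixT u r c (r + j + 1) = u (r + 1 + j + 1) := by
      have h1 : ¬ (r + j + 1 < r) := by omega
      have h2 : r + j + 1 ≠ r := by omega
      simp only [fixT, if_neg h1, if_neg h2]
      congr 1; ring
    rw [this]

/-- every branch of the fixed tree has bit `c` at position `oi u r` -/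
lemma branch_fix_bit (u : ℕ → List Bool) (r : ℕ) (c : Bool) {a : ℕ → Bool}
    (ha : a ∈ branches (stree (fixT u r c))) : a (oi u r) = c := by
  set u' := fixT u r c with hu'
  obtain ⟨i, hi⟩ := branch_restrict ha r
  have hval : a (oi u r) = (silverWord u' i r).getD (oi u r) false := by
    rw [← hi, restrictReal_getD]
    have h1 : oi u r ≤ oi u' r := by
      rcases Nat.eq_zero_or_pos r with rfl | hr
      · rw [(by rw [Nat.add_zero] : oi u' 0 = oi u' (0 + 0)), oi_fix_ge u 0 c 0]
        exact (oi_strictMono u).monotone (by omega)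
      · rw [(by rw [Nat.add_zero] : oi u' r = oi u' (r + 0)), oi_fix_ge u r c 0]
        exact (oi_strictMono u).monotone (by omega)
    omega
  rcases Nat.eq_zero_or_pos r with rfl | hr
  · -- position |u 0| inside block u' 0 = u 0 ++ c :: u 1
    rw [hval, word_get_u0 u' i (by simp [hu', fixT, oi_zero])]
    have : u' 0 = u 0 ++ c :: u 1 := by simp [hu', fixT]
    rw [this, oi_zero, List.getD_append_right _ _ _ _ le_rfl]
    simp
  · obtain ⟨r', rfl⟩ : ∃ r', r = r' + 1 := ⟨r - 1, by omega⟩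
    have hpos : oi u (r'+1) = oi u' r' + 1 + (u (r'+1)).length := by
      rw [oi_fix_lt u (r'+1) c (Nat.lt_succ_self r'), oi_succ]
      ring
    have hblock : u' (r'+1) = u (r'+1) ++ c :: u (r'+2) := by simp [hu', fixT]
    rw [hval, hpos, word_get_mid u' i (Nat.lt_succ_self r') (by rw [hblock]; simp)]
    rw [hblock, List.getD_append_right _ _ _ _ le_rfl]
    simp


lemma isSilver_iff {T : Set (List Bool)} {u : ℕ → List Bool} :
    IsSilver T u ↔ T = stree u := Iff.rfl

/-- splitting levels are unique -/
lemma oi_unique {T : Set (List Bool)} {u u' : ℕ → List Bool}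
    (h : IsSilver T u) (h' : IsSilver T u') : oi u = oi u' := by
  rw [isSilver_iff] at h h'
  have : Set.range (oi u) = Set.range (oi u') := by
    rw [← splits_stree, ← splits_stree, ← h, ← h']
  exact ((oi_strictMono u).range_inj (oi_strictMono u')).mp this

lemma branches_mono {S T : Set (List Bool)} (h : S ⊆ T) : branches S ⊆ branches T :=
  fun _ ha n => h (ha n)

/-- iterated fixing -/
def iterFix (u : ℕ → List Bool) (r : ℕ) (c : ℕ → Bool) : ℕ → (ℕ → List Bool)
  | 0 => u
  | s + 1 => fixT (iterFix u r c s) r (c s)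

lemma iterFix_subset (u : ℕ → List Bool) (r : ℕ) (c : ℕ → Bool) (s : ℕ) :
    stree (iterFix u r c s) ⊆ stree u := by
  induction s with
  | zero => exact subset_rfl
  | succ s ih => exact (stree_fix_subset _ r (c s)).trans ih

lemma iterFix_subset' (u : ℕ → List Bool) (r : ℕ) (c : ℕ → Bool) {s t : ℕ} (h : t ≤ s) :
    stree (iterFix u r c s) ⊆ stree (iterFix u r c t) := by
  induction s with
  | zero => have : t = 0 := by omega
            subst this; exact subset_rfl
  | succ s ih =>
    rcases Nat.le_succ_iff.mp h with h' | rfl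
    · exact (stree_fix_subset _ r (c s)).trans (ih h')
    · exact subset_rfl

lemma iterFix_oi_lt (u : ℕ → List Bool) (r : ℕ) (c : ℕ → Bool) (s : ℕ) {j : ℕ}
    (hj : j < r) : oi (iterFix u r c s) j = oi u j := by
  induction s with
  | zero => rfl
  | succ s ih => rw [show iterFix u r c (s+1) = fixT (iterFix u r c s) r (c s) from rfl,
      oi_fix_lt _ r _ hj, ih]

lemma iterFix_oi_ge (u : ℕ → List Bool) (r : ℕ) (c : ℕ → Bool) (s : ℕ) (j : ℕ) :
    oi (iterFix u r c s) (r + j) = oi u (r + s + j) := by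
  induction s generalizing j with
  | zero => congr 1 <;> omega
  | succ s ih =>
    rw [show iterFix u r c (s+1) = fixT (iterFix u r c s) r (c s) from rfl,
      oi_fix_ge _ r _ j, show r + 1 + j = r + (1 + j) from by ring, ih,
      show r + s + (1+j) = r + (s+1) + j from by ring]

/-- branches of the `s`-times fixed tree take the fixed values -/
lemma iterFix_branch_bit (u : ℕ → List Bool) (r : ℕ) (c : ℕ → Bool) (s : ℕ)
    {a : ℕ → Bool} (ha : a ∈ branches (stree (iterFix u r c s))) {t : ℕ} (ht : t < s) :
    a (oi u (r + t)) = c t := by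
  have h1 : a ∈ branches (stree (iterFix u r c (t+1))) :=
    branches_mono (iterFix_subset' u r c ht) ha
  have h2 := branch_fix_bit (iterFix u r c t) r (c t) h1
  have h3 : oi (iterFix u r c t) r = oi u (r + t) := by
    have h4 := iterFix_oi_ge u r c t 0
    simpa using h4
  rwa [h3] at h2

/-- an open set in a product of discrete-indexed Pi-types contains a cylinder -/
lemma open_cylinder {X : ℕ → Type*} [∀ n, TopologicalSpace (X n)]
    {O : Set (∀ n, X n)} (hO : IsOpen O) {a₀ : ∀ n, X n} (ha : a₀ ∈ O) :
    ∃ m, ∀ a : ∀ n, X n, (∀ l < m, a l = a₀ l) → a ∈ O := by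
  obtain ⟨I, V, hV, hsub⟩ := isOpen_pi_iff.mp hO a₀ ha
  refine ⟨(I.sup id) + 1, fun a hagree => hsub (fun l hl => ?_)⟩
  rw [hagree l (Nat.lt_succ_of_le (Finset.le_sup (f := id) hl))]
  exact (hV l hl).2

/-- continuity modulus at a point -/
lemma cont_modulus {T : Set (List Bool)} (f : (ℕ → Bool) × (ℕ → ℕ) → (ℕ → Bool))
    (hf : ContinuousOn f (branches T ×ˢ (Set.univ : Set (ℕ → ℕ))))
    {a₀ : ℕ → Bool} (ha₀ : a₀ ∈ branches T) (x₀ : ℕ → ℕ) (P : ℕ) :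
    ∃ m, ∀ a ∈ branches T, ∀ x : ℕ → ℕ, (∀ l < m, a l = a₀ l) → (∀ l < m, x l = x₀ l) →
      ∀ l < P, f (a, x) l = f (a₀, x₀) l := by
  set O : Set (ℕ → Bool) := {b | ∀ l < P, b l = f (a₀, x₀) l} with hO
  have hOopen : IsOpen O := by
    have : O = ⋂ l ∈ Finset.range P, (fun b : ℕ → Bool => b l) ⁻¹' {f (a₀, x₀) l} := by
      ext b; simp [hO]
    rw [this]
    exact isOpen_biInter_finset (fun l _ =>
      (continuous_apply l).isOpen_preimage _ (isOpen_discrete _))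
  have hz : (a₀, x₀) ∈ branches T ×ˢ (Set.univ : Set (ℕ → ℕ)) := ⟨ha₀, trivial⟩
  have hnb : f ⁻¹' O ∈ nhdsWithin (a₀, x₀) (branches T ×ˢ (Set.univ : Set (ℕ → ℕ))) :=
    hf (a₀, x₀) hz (hOopen.mem_nhds (fun l _ => rfl))
  obtain ⟨W, hWopen, hWz, hWsub⟩ := mem_nhdsWithin.mp hnb
  obtain ⟨O1, O2, hO1, hO2, hzO1, hzO2, hprod⟩ := isOpen_prod_iff.mp hWopen a₀ x₀ hWz
  obtain ⟨m1, hm1⟩ := open_cylinder hO1 hzO1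
  obtain ⟨m2, hm2⟩ := open_cylinder hO2 hzO2
  refine ⟨max m1 m2, fun a ha x hax hxx l hl => ?_⟩
  have haO1 : a ∈ O1 := hm1 a (fun l hl => hax l (lt_of_lt_of_le hl (le_max_left _ _)))
  have hxO2 : x ∈ O2 := hm2 x (fun l hl => hxx l (lt_of_lt_of_le hl (le_max_right _ _)))
  have : (a, x) ∈ W ∩ (branches T ×ˢ (Set.univ : Set (ℕ → ℕ))) :=
    ⟨hprod ⟨haO1, hxO2⟩, ⟨ha, trivial⟩⟩
  exact hWsub this l hl

end Aux11

open Aux11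

/-- if `T`, `U` are Silver trees, `f` is continuous on
`[T] × ω^ω`, `σ ∈ 2^{<ω}`, `v ∈ ω^{<ω}`, `k < ω`, then there are `w ⊇ v` and
Silver trees `S ⊑_{k+1} T`, `V ⊑_{k+1} U` such that `f(a,x) ∉ σ⊕[V]` for all
`a ∈ [S]` and `x ∈ B_w`. -/
theorem stmt11 (T U : Set (List Bool)) (hT : SilverTree T) (hU : SilverTree U)
    (f : (ℕ → Bool) × (ℕ → ℕ) → (ℕ → Bool))
    (hf : ContinuousOn f (branches T ×ˢ (univ : Set (ℕ → ℕ))))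
    (σ : List Bool) (v : List ℕ) (k : ℕ) :
    ∃ w : List ℕ, v <+: w ∧
      ∃ S V : Set (List Bool),
        SilverTree S ∧ SilverTree V ∧
        RefinesN S T (k + 1) ∧ RefinesN V U (k + 1) ∧
        ∀ a ∈ branches S, ∀ x ∈ baire w,
          f (a, x) ∉ shiftR σ '' branches V := by

  classical
  obtain ⟨uT, hTs⟩ := hT
  obtain ⟨uU, hUs⟩ := hU
  rw [isSilver_iff] at hTs hUs
  subst hTs; subst hUs
  -- the fixed Baire point
  set x₀ : ℕ → ℕ := fun l => v.getD l 0 with hx₀def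
  -- patterns of the first k+1 split bits
  set Lp : List (Fin (k+1) → Bool) := (Finset.univ : Finset (Fin (k+1) → Bool)).toList
    with hLp
  set M : ℕ := Lp.length with hM
  set patF : ℕ → (Fin (k+1) → Bool) := fun s => Lp.getD s (fun _ => false) with hpatF
  set ext : (Fin (k+1) → Bool) → (ℕ → Bool) :=
    fun t j => if h : j < k+1 then t ⟨j, h⟩ else false with hext
  set aT : (Fin (k+1) → Bool) → (ℕ → Bool) := fun t => sBranch uT (ext t) with haTdef
  have haT : ∀ t, aT t ∈ branches (stree uT) := fun t => sBranch_mem_branches _ _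
  set P : ℕ := oi uU (k+1+M) + 1 with hP
  -- continuity moduli
  have hmod : ∀ t : Fin (k+1) → Bool, ∃ m, ∀ a ∈ branches (stree uT), ∀ x : ℕ → ℕ,
      (∀ l < m, a l = aT t l) → (∀ l < m, x l = x₀ l) →
      ∀ l < P, f (a, x) l = f (aT t, x₀) l :=
    fun t => cont_modulus f hf (haT t) x₀ P
  choose mf hmf using hmod
  set m : ℕ := max v.length ((Finset.univ : Finset (Fin (k+1) → Bool)).sup mf) with hm
  -- the refinements
  set uS : ℕ → List Bool := iterFix uT (k+1) (fun _ => false) m with huS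
  set p : ℕ → ℕ := fun s => oi uU (k+1+s) with hp
  set cV : ℕ → Bool := fun s => !(xor (f (aT (patF s), x₀) (p s)) (σ.getD (p s) false))
    with hcV
  set uV : ℕ → List Bool := iterFix uU (k+1) cV M with huV
  set w : List ℕ := List.ofFn (fun l : Fin m => x₀ l) with hw
  have hwlen : w.length = m := by simp [hw]
  have hwget : ∀ l (h : l < m), w.get ⟨l, hwlen ▸ h⟩ = x₀ l := by
    intro l h; simp [hw]
  have hvm : v.length ≤ m := le_max_left _ _
  refine ⟨w, ?_, stree uS, stree uV, ⟨uS, isSilver_stree uS⟩, ⟨uV, isSilver_stree uV⟩,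
    ?_, ?_, ?_⟩
  · -- v <+: w
    rw [List.prefix_iff_eq_take]
    refine List.ext_getElem (by simp [hwlen]; omega) ?_
    intro l h1 h2
    have hlv : l < v.length := h1
    have hlm : l < m := lt_of_lt_of_le hlv hvm
    rw [List.getElem_take]
    show v[l] = w[l]
    have : w[l] = x₀ l := by simp [hw]
    rw [this, hx₀def]
    exact (List.getD_eq_getElem v 0 hlv).symm
  · -- RefinesN S T
    refine ⟨iterFix_subset uT (k+1) _ m, fun uS' uT' hS' hT' j hj => ?_⟩
    rw [congrFun (oi_unique hS' (isSilver_stree uS)) j,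
        congrFun (oi_unique hT' (isSilver_stree uT)) j]
    exact iterFix_oi_lt uT (k+1) _ m hj
  · -- RefinesN V U
    refine ⟨iterFix_subset uU (k+1) _ M, fun uV' uU' hV' hU' j hj => ?_⟩
    rw [congrFun (oi_unique hV' (isSilver_stree uV)) j,
        congrFun (oi_unique hU' (isSilver_stree uU)) j]
    exact iterFix_oi_lt uU (k+1) _ M hj
  · -- the main property
    rintro a ha x hx ⟨β, hβ, hfeq⟩
    have haT' : a ∈ branches (stree uT) :=
      branches_mono (iterFix_subset uT (k+1) _ m) ha
    set t : Fin (k+1) → Bool := fun j => a (oi uT j) with ht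
    -- a agrees with the reference branch aT t below m
    have hbits : ∀ j ≤ k + m, a (oi uT j) = aT t (oi uT j) := by
      intro j hj
      have hre : aT t (oi uT j) = ext t j := sBranch_split uT (ext t) j
      rcases Nat.lt_or_ge j (k+1) with hjk | hjk
      · rw [hre, hext]
        simp only [hjk, dif_pos]
        rfl
      · have hs : j - (k+1) < m := by omega
        have hfix : a (oi uT ((k+1) + (j - (k+1)))) = false :=
          iterFix_branch_bit uT (k+1) (fun _ => false) m ha hs
        have hjj : (k+1) + (j - (k+1)) = j := by omega
        rw [hjj] at hfix
        rw [hre, hfix, hext]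
        simp [Nat.not_lt_of_ge hjk]
    have hagree : ∀ l < m, a l = aT t l := by
      intro l hl
      exact branch_agree haT' (haT t) hbits
        (le_trans (by omega : l ≤ k + m) (self_le_oi uT (k + m)))
    have hxagree : ∀ l < m, x l = x₀ l := by
      intro l hl
      have := hx ⟨l, hwlen ▸ hl⟩
      rw [this]
      exact hwget l hl
    -- locate the pattern in the list
    have htmem : t ∈ Lp := by rw [hLp]; exact Finset.mem_toList.mpr (Finset.mem_univ t)
    obtain ⟨s, hsM, hgs⟩ := List.mem_iff_getElem.mp htmem
    have hpat : patF s = t := by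
      show Lp.getD s (fun _ => false) = t
      rw [List.getD_eq_getElem _ _ hsM]
      exact hgs
    -- the modulus bound
    have hmft : mf t ≤ m :=
      le_trans (Finset.le_sup (Finset.mem_univ t)) (le_max_right _ _)
    have key : ∀ l < P, f (a, x) l = f (aT t, x₀) l :=
      hmf t a haT' x (fun l hl => hagree l (lt_of_lt_of_le hl hmft))
        (fun l hl => hxagree l (lt_of_lt_of_le hl hmft))
    have hps : p s < P := by
      rw [hp, hP]
      exact Nat.lt_succ_of_le ((oi_strictMono uU).monotone (by omega))
    have hβbit : β (oi uU ((k+1) + s)) = cV s :=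
      iterFix_branch_bit uU (k+1) cV M hβ hsM
    have hβp : β (p s) = cV s := hβbit
    have heq1 : f (a, x) (p s) = f (aT t, x₀) (p s) := key _ hps
    have heq2 : shiftR σ β (p s) = f (a, x) (p s) := congrFun hfeq (p s)
    rw [heq1] at heq2
    unfold shiftR at heq2
    have hcVs : cV s = !(xor (f (aT t, x₀) (p s)) (σ.getD (p s) false)) := by
      simp only [hcV, hpat]
    rw [hβp, hcVs] at heq2
    revert heq2
    cases f (aT t, x₀) (p s) <;> cases σ.getD (p s) false <;> simp
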